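/- arXiv:1001.1853 — 5 statements merged into one kernel-verified Lean document; each statement's English description precedes it below -/
import Mathlib

section
/- Let 0 < q < 2, α > 0, β > 0, δ > 0 and set α₁ = α + δ. Define c = c(q,δ) = (exp(2qδ/(2−q)) − 1)^{(2−q)/(2q)}. If a square-summable sequence η satisfies ∑_{k≥1} (exp(α₁ k) k^β η_k)² ≤ (cL)², then ∑_{k≥1} |exp(α k) k^β η_k|^q ≤ L^q. -/
/-- Embedding of an `l²`-ellipsoid with larger analytic smoothness into the
`l^q`-body with smaller analytic smoothness, for `0 < q < 2`. -/
theorem analytic_class_embedding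
    (q α β δ L : ℝ) (hq0 : 0 < q) (hq2 : q < 2) (hα : 0 < α) (hβ : 0 < β)
    (hδ : 0 < δ) (hL : 0 < L)
    (c : ℝ) (hc : c = (Real.exp (2 * q * δ / (2 - q)) - 1) ^ ((2 - q) / (2 * q)))
    (η : ℕ → ℝ)
    (hη : Summable fun k => (η k) ^ 2)
    (hsq : Summable fun k : ℕ =>
      (Real.exp ((α + δ) * (k + 1)) * ((k : ℝ) + 1) ^ β * η (k + 1)) ^ 2)
    (hball : ∑' k : ℕ,
      (Real.exp ((α + δ) * (k + 1)) * ((k : ℝ) + 1) ^ β * η (k + 1)) ^ 2 ≤ (c * L) ^ 2) :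
    ∑' k : ℕ, |Real.exp (α * (k + 1)) * ((k : ℝ) + 1) ^ β * η (k + 1)| ^ q ≤ L ^ q := by
  have h2q : (0:ℝ) < 2 - q := by linarith
  set r : ℝ := 2 * q * δ / (2 - q) with hr
  have hrpos : 0 < r := by positivity
  have h1 : (1:ℝ) < Real.exp r := by
    rw [← Real.exp_zero]; exact Real.exp_lt_exp.2 hrpos
  have hE : (0:ℝ) < Real.exp r - 1 := by linarith
  set s : ℕ → ℝ := fun k => Real.exp ((α + δ) * (k + 1)) * ((k : ℝ) + 1) ^ β * η (k + 1)
    with hs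
  set f : ℕ → ℝ := fun k => |s k| ^ q with hf
  set g : ℕ → ℝ := fun k => Real.exp (-(δ * q) * (k + 1)) with hg
  have hp' : (2 / q : ℝ).HolderConjugate (2 / (2 - q)) := by
    constructor
    · rw [inv_div, inv_div, inv_one, ← add_div]; ring_nf
    · exact div_pos two_pos hq0
    · exact div_pos two_pos h2q
  have hfnn : ∀ i, 0 ≤ f i := fun i => Real.rpow_nonneg (abs_nonneg _) _
  have hgnn : ∀ i, 0 ≤ g i := fun i => (Real.exp_pos _).le
  -- rewrite target terms as f k * g k
  have hterm : ∀ k : ℕ,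
      |Real.exp (α * (k + 1)) * ((k : ℝ) + 1) ^ β * η (k + 1)| ^ q = f k * g k := by
    intro k
    have he : Real.exp (α * (k + 1)) * ((k : ℝ) + 1) ^ β * η (k + 1)
        = s k * Real.exp (-δ * (k + 1)) := by
      simp only [hs]
      rw [show (α + δ) * ((k:ℝ) + 1) = α * (k + 1) + δ * (k + 1) by ring, Real.exp_add]
      rw [show (-δ : ℝ) * (k + 1) = -(δ * (k + 1)) by ring, Real.exp_neg]
      field_simp
    rw [he, abs_mul, Real.mul_rpow (abs_nonneg _) (abs_nonneg _)]
    congr 1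
    rw [abs_of_pos (Real.exp_pos _), ← Real.exp_mul]
    congr 1
    ring
  -- f ^ (2/q) = s ^ 2
  have hfp : ∀ i : ℕ, f i ^ (2 / q : ℝ) = s i ^ 2 := by
    intro i
    rw [hf]
    dsimp only
    rw [← Real.rpow_mul (abs_nonneg _),
      show q * (2 / q) = ((2:ℕ):ℝ) by
        push_cast; rw [mul_comm, div_mul_cancel₀ _ (ne_of_gt hq0)],
      Real.rpow_natCast, sq_abs]
  have hgq : ∀ i : ℕ, g i ^ (2 / (2 - q) : ℝ) = Real.exp (-r) ^ (i + 1) := by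
    intro i
    rw [hg]
    dsimp only
    rw [← Real.exp_mul, ← Real.exp_nat_mul]
    congr 1
    rw [hr]
    push_cast
    ring
  have hf_sum : Summable fun i => f i ^ (2 / q : ℝ) := by
    simpa only [hfp] using hsq
  have hx1 : Real.exp (-r) < 1 := Real.exp_lt_one_iff.2 (by linarith)
  have hx0 : (0:ℝ) ≤ Real.exp (-r) := (Real.exp_pos _).le
  have hg_sum : Summable fun i => g i ^ (2 / (2 - q) : ℝ) := by
    simp only [hgq, pow_succ]
    exact (summable_geometric_of_lt_one hx0 hx1).mul_right _
  have hgeo : ∑' i : ℕ, g i ^ (2 / (2 - q) : ℝ) = (Real.exp r - 1)⁻¹ := by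
    simp only [hgq, pow_succ]
    rw [tsum_mul_right, tsum_geometric_of_lt_one hx0 hx1, Real.exp_neg]
    have hne : Real.exp r ≠ 0 := (Real.exp_pos r).ne'
    have hne2 : 1 - (Real.exp r)⁻¹ ≠ 0 := by
      have : (Real.exp r)⁻¹ < 1 := inv_lt_one_of_one_lt₀ h1
      linarith
    field_simp
  have hholder := Real.inner_le_Lp_mul_Lq_tsum_of_nonneg hp' hfnn hgnn hf_sum hg_sum
  calc ∑' k : ℕ, |Real.exp (α * (k + 1)) * ((k : ℝ) + 1) ^ β * η (k + 1)| ^ q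
      = ∑' k : ℕ, f k * g k := by simp only [hterm]
    _ ≤ (∑' i, f i ^ (2 / q : ℝ)) ^ (1 / (2 / q)) *
        (∑' i, g i ^ (2 / (2 - q) : ℝ)) ^ (1 / (2 / (2 - q))) := hholder
    _ = (∑' i, s i ^ 2) ^ (q / 2 : ℝ) * (Real.exp r - 1) ^ (-((2 - q) / 2) : ℝ) := by
        rw [hgeo, one_div_div, one_div_div, ← Real.rpow_neg_one (Real.exp r - 1),
          ← Real.rpow_mul hE.le]
        simp only [hfp]
        norm_num
    _ ≤ ((c * L) ^ 2) ^ (q / 2 : ℝ) * (Real.exp r - 1) ^ (-((2 - q) / 2) : ℝ) := by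
        have hnn : (0:ℝ) ≤ ∑' i, s i ^ 2 := tsum_nonneg fun i => sq_nonneg _
        exact mul_le_mul_of_nonneg_right
          (Real.rpow_le_rpow hnn hball (by positivity)) (Real.rpow_nonneg hE.le _)
    _ = L ^ q := by
        have hcpos : 0 < c := by rw [hc]; positivity
        rw [← Real.rpow_natCast (c * L) 2, ← Real.rpow_mul (by positivity : (0:ℝ) ≤ c * L),
          show ((2:ℕ):ℝ) * (q / 2) = q by push_cast; ring,
          Real.mul_rpow hcpos.le hL.le, hc, ← Real.rpow_mul hE.le,
          show (2 - q) / (2 * q) * q = (2 - q) / 2 by field_simp,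
          mul_right_comm, ← Real.rpow_add hE]
        norm_num
end

section
/- Let {b_i} and {c_i} be positive sequences with b_i strictly increasing, b_i → ∞ and c_i b_i → ∞. For r > 0, let X be the set of nonnegative sequences x with ∑_i b_i c_i x_i ≤ 1 and ∑_i c_i x_i ≥ r. Define B_k = (∑_{i=1}^k c_i)/(∑_{i=1}^k b_i c_i) and C_k = 1/(∑_{i=1}^k b_i c_i). Suppose m ≥ 1 satisfies B_m ≤ r ≤ B_{m−1}. Then the infimum w(r) = inf_{x ∈ X} sup_i x_i satisfies C_m ≤ w(r) ≤ C_{m−1}. -/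
open Filter in
set_option maxHeartbeats 1000000 in
/-- Bounds for the value `w(r) = inf_{x ∈ X} sup_i x_i` of the extremal
problem over nonnegative sequences `x` with `∑ b_i c_i x_i ≤ 1` and
`∑ c_i x_i ≥ r`: if `B_m ≤ r ≤ B_{m−1}` then `C_m ≤ w(r) ≤ C_{m−1}`. -/
theorem extreme_sup_problem_bounds
    (b c : ℕ → ℝ)
    (hb : ∀ i, 1 ≤ i → 0 < b i) (hc : ∀ i, 1 ≤ i → 0 < c i)
    (hbmono : StrictMonoOn b {i : ℕ | 1 ≤ i})
    (hbtop : Tendsto b atTop atTop)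
    (hcb : Tendsto (fun i => c i * b i) atTop atTop)
    (r : ℝ) (hr : 0 < r)
    (X : Set (ℕ → ℝ))
    (hX : X = {x | (∀ i, 0 ≤ x i) ∧
        (Summable fun i : ℕ => b (i + 1) * c (i + 1) * x (i + 1)) ∧
        (∑' i : ℕ, b (i + 1) * c (i + 1) * x (i + 1)) ≤ 1 ∧
        r ≤ ∑' i : ℕ, c (i + 1) * x (i + 1)})
    (m : ℕ) (hm : 1 ≤ m)
    (hBm : (∑ i ∈ Finset.Icc 1 m, c i) / (∑ i ∈ Finset.Icc 1 m, b i * c i) ≤ r)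
    (hBm1 : r ≤ (∑ i ∈ Finset.Icc 1 (m - 1), c i) / (∑ i ∈ Finset.Icc 1 (m - 1), b i * c i)) :
    (∑ i ∈ Finset.Icc 1 m, b i * c i)⁻¹ ≤ sInf ((fun x => ⨆ i : ℕ, x (i + 1)) '' X) ∧
    sInf ((fun x => ⨆ i : ℕ, x (i + 1)) '' X) ≤ (∑ i ∈ Finset.Icc 1 (m - 1), b i * c i)⁻¹ := by
  -- Icc to range conversion
  have hIcc : ∀ (k : ℕ) (h : ℕ → ℝ),
      ∑ i ∈ Finset.Icc 1 k, h i = ∑ i ∈ Finset.range k, h (i + 1) := by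
    intro k h
    rw [← Finset.Ico_add_one_right_eq_Icc, Finset.sum_Ico_eq_sum_range]
    simp [add_comm]
  -- m = 1 is impossible
  rcases Nat.lt_or_ge m 2 with hm2 | hm2
  · have hm1 : m = 1 := by omega
    subst hm1
    simp at hBm1
    linarith
  -- now m ≥ 2; set n = m - 1
  obtain ⟨n, rfl⟩ : ∃ n, m = n + 1 := ⟨m - 1, by omega⟩
  have hn : 1 ≤ n := by omega
  have hmn : n + 1 - 1 = n := by omega
  rw [hmn] at hBm1 ⊢
  subst hX
  -- positivity of partial sums
  have hpos : ∀ k, 1 ≤ k → 0 < ∑ i ∈ Finset.Icc 1 k, b i * c i := by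
    intro k hk
    apply Finset.sum_pos
    · intro i hi
      simp only [Finset.mem_Icc] at hi
      exact mul_pos (hb i hi.1) (hc i hi.1)
    · exact Finset.nonempty_Icc.2 hk
  have hposc : ∀ k, 1 ≤ k → 0 < ∑ i ∈ Finset.Icc 1 k, c i := by
    intro k hk
    apply Finset.sum_pos
    · intro i hi
      simp only [Finset.mem_Icc] at hi
      exact hc i hi.1
    · exact Finset.nonempty_Icc.2 hk
  -- the witness element for the upper bound
  set w0 : ℝ := (∑ i ∈ Finset.Icc 1 n, b i * c i)⁻¹ with hw0
  have hSn := hpos n hn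
  have hw0pos : 0 < w0 := inv_pos.2 hSn
  set x0 : ℕ → ℝ := fun i => if i ∈ Finset.Icc 1 n then w0 else 0 with hx0
  have hx0nn : ∀ i, 0 ≤ x0 i := by
    intro i; simp only [hx0]; split <;> [exact hw0pos.le; exact le_refl 0]
  have hx0supp : ∀ i ∉ Finset.range n, b (i + 1) * c (i + 1) * x0 (i + 1) = 0 := by
    intro i hi
    simp only [Finset.mem_range, not_lt] at hi
    have : x0 (i + 1) = 0 := by
      simp only [hx0, Finset.mem_Icc]
      rw [if_neg]; omega
    rw [this, mul_zero]
  have hx0suppc : ∀ i ∉ Finset.range n, c (i + 1) * x0 (i + 1) = 0 := by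
    intro i hi
    simp only [Finset.mem_range, not_lt] at hi
    have : x0 (i + 1) = 0 := by
      simp only [hx0, Finset.mem_Icc]
      rw [if_neg]; omega
    rw [this, mul_zero]
  have hx0val : ∀ i ∈ Finset.range n, x0 (i + 1) = w0 := by
    intro i hi
    simp only [Finset.mem_range] at hi
    simp only [hx0, Finset.mem_Icc]
    rw [if_pos]; omega
  have hsum1 : (∑' i : ℕ, b (i + 1) * c (i + 1) * x0 (i + 1)) = 1 := by
    rw [tsum_eq_sum hx0supp]
    have : ∑ i ∈ Finset.range n, b (i + 1) * c (i + 1) * x0 (i + 1)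
        = (∑ i ∈ Finset.Icc 1 n, b i * c i) * w0 := by
      rw [hIcc n (fun i => b i * c i), Finset.sum_mul]
      exact Finset.sum_congr rfl fun i hi => by rw [hx0val i hi]
    rw [this, mul_inv_cancel₀ (ne_of_gt hSn)]
  have hsum2 : (∑' i : ℕ, c (i + 1) * x0 (i + 1)) = (∑ i ∈ Finset.Icc 1 n, c i) * w0 := by
    rw [tsum_eq_sum hx0suppc, hIcc n c, Finset.sum_mul]
    exact Finset.sum_congr rfl fun i hi => by rw [hx0val i hi]
  have hx0mem : (∀ i, 0 ≤ x0 i) ∧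
        (Summable fun i : ℕ => b (i + 1) * c (i + 1) * x0 (i + 1)) ∧
        (∑' i : ℕ, b (i + 1) * c (i + 1) * x0 (i + 1)) ≤ 1 ∧
        r ≤ ∑' i : ℕ, c (i + 1) * x0 (i + 1) := by
    refine ⟨hx0nn, summable_of_ne_finset_zero hx0supp, le_of_eq hsum1, ?_⟩
    rw [hsum2]
    calc r ≤ (∑ i ∈ Finset.Icc 1 n, c i) / (∑ i ∈ Finset.Icc 1 n, b i * c i) := hBm1
      _ = (∑ i ∈ Finset.Icc 1 n, c i) * w0 := by rw [div_eq_mul_inv]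
  have hx0bdd : BddAbove (Set.range fun i : ℕ => x0 (i + 1)) := by
    refine ⟨w0, ?_⟩
    rintro y ⟨i, rfl⟩
    simp only [hx0]; split <;> [exact le_refl w0; exact hw0pos.le]
  have hx0sup : (⨆ i : ℕ, x0 (i + 1)) = w0 := by
    apply le_antisymm
    · apply ciSup_le
      intro i
      simp only [hx0]; split <;> [exact le_refl w0; exact hw0pos.le]
    · have h1 : x0 (0 + 1) = w0 := by
        simp only [hx0, Finset.mem_Icc]
        rw [if_pos]; omega
      rw [← h1]
      exact le_ciSup hx0bdd 0
  -- lower bound core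
  have hlow : ∀ x : ℕ → ℝ, (∀ i, 0 ≤ x i) →
      (Summable fun i : ℕ => b (i + 1) * c (i + 1) * x (i + 1)) →
      (∑' i : ℕ, b (i + 1) * c (i + 1) * x (i + 1)) ≤ 1 →
      r ≤ (∑' i : ℕ, c (i + 1) * x (i + 1)) →
      (∑ i ∈ Finset.Icc 1 (n+1), b i * c i)⁻¹ ≤ ⨆ i : ℕ, x (i + 1) := by
    intro x hxnn hf h1 h2
    set m := n + 1 with hmdef
    have hm1 : 1 ≤ m := by omega
    -- summability of c x
    have hg : Summable (fun i : ℕ => c (i + 1) * x (i + 1)) := by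
      by_contra hng
      rw [tsum_eq_zero_of_not_summable hng] at h2
      linarith
    -- bounded above
    obtain ⟨N, hN⟩ := eventually_atTop.mp (hcb.eventually_ge_atTop 1)
    have hterm_le : ∀ i : ℕ, b (i + 1) * c (i + 1) * x (i + 1) ≤ 1 := by
      intro i
      refine le_trans (Summable.le_tsum hf i fun j _ => ?_) h1
      exact mul_nonneg (mul_nonneg (hb _ (by omega)).le (hc _ (by omega)).le) (hxnn _)
    have hbd : BddAbove (Set.range fun i : ℕ => x (i + 1)) := by
      refine ⟨max 1 (∑ j ∈ Finset.range (N + 1), x j), ?_⟩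
      rintro y ⟨i, rfl⟩
      rcases le_or_gt N (i + 1) with h | h
      · have h1' : 1 ≤ c (i+1) * b (i+1) := hN _ h
        have h2' := hterm_le i
        have h3' := hxnn (i + 1)
        have : x (i + 1) ≤ 1 := by nlinarith
        exact le_trans this (le_max_left _ _)
      · refine le_trans ?_ (le_max_right _ _)
        exact Finset.single_le_sum (fun j _ => hxnn j) (Finset.mem_range.2 (by omega))
    set w : ℝ := ⨆ i : ℕ, x (i + 1) with hwdef
    have hwx : ∀ i : ℕ, x (i + 1) ≤ w := fun i => le_ciSup hbd i
    -- tail summability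
    have hf_tail : Summable (fun i : ℕ => b (i + m + 1) * c (i + m + 1) * x (i + m + 1)) := by
      have := (summable_nat_add_iff m).2 hf
      exact this.congr fun i => by ring_nf
    have hg_tail : Summable (fun i : ℕ => c (i + m + 1) * x (i + m + 1)) := by
      have := (summable_nat_add_iff m).2 hg
      exact this.congr fun i => by ring_nf
    have hbm1 : 0 < b (m + 1) := hb _ (by omega)
    -- termwise tail comparison
    have htail : (∑' i : ℕ, b (m + 1) * (c (i + m + 1) * x (i + m + 1)))
        ≤ ∑' i : ℕ, b (i + m + 1) * c (i + m + 1) * x (i + m + 1) := by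
      refine Summable.tsum_le_tsum (fun i => ?_) (hg_tail.mul_left _) hf_tail
      have hble : b (m + 1) ≤ b (i + m + 1) :=
        hbmono.monotoneOn (by simp only [Set.mem_setOf_eq]; omega) (by simp only [Set.mem_setOf_eq]; omega) (by omega)
      have hcx : 0 ≤ c (i + m + 1) * x (i + m + 1) :=
        mul_nonneg (hc _ (by omega)).le (hxnn _)
      calc b (m + 1) * (c (i + m + 1) * x (i + m + 1))
          ≤ b (i + m + 1) * (c (i + m + 1) * x (i + m + 1)) :=
            mul_le_mul_of_nonneg_right hble hcx
        _ = b (i + m + 1) * c (i + m + 1) * x (i + m + 1) := by ring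
    -- split sums
    have hsplit_f : ∑ i ∈ Finset.range m, b (i + 1) * c (i + 1) * x (i + 1)
        + ∑' i : ℕ, b (i + m + 1) * c (i + m + 1) * x (i + m + 1)
        = ∑' i : ℕ, b (i + 1) * c (i + 1) * x (i + 1) := by
      rw [← Summable.sum_add_tsum_nat_add m hf]
    have hsplit_g : ∑ i ∈ Finset.range m, c (i + 1) * x (i + 1)
        + ∑' i : ℕ, c (i + m + 1) * x (i + m + 1)
        = ∑' i : ℕ, c (i + 1) * x (i + 1) := by
      rw [← Summable.sum_add_tsum_nat_add m hg]
    have htail_mul : (∑' i : ℕ, b (m + 1) * (c (i + m + 1) * x (i + m + 1)))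
        = b (m + 1) * ∑' i : ℕ, c (i + m + 1) * x (i + m + 1) := tsum_mul_left
    -- key inequality
    set Sg := ∑ i ∈ Finset.range m, c (i + 1) * x (i + 1) with hSg
    set Sf := ∑ i ∈ Finset.range m, b (i + 1) * c (i + 1) * x (i + 1) with hSf
    set Tg := ∑' i : ℕ, c (i + m + 1) * x (i + m + 1) with hTg
    set Tf := ∑' i : ℕ, b (i + m + 1) * c (i + m + 1) * x (i + m + 1) with hTf
    have hkey1 : r * b (m + 1) ≤ b (m + 1) * Sg + Tf := by
      have hbTg : b (m + 1) * Tg ≤ Tf := by rw [← htail_mul]; exact htail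
      rw [← hsplit_g] at h2
      have := mul_le_mul_of_nonneg_left h2 hbm1.le
      linarith
    have hkey2 : Tf ≤ 1 - Sf := by rw [← hsplit_f] at h1; linarith
    set D : ℝ := ∑ i ∈ Finset.range m, c (i + 1) * (b (m + 1) - b (i + 1)) with hD
    have hDpos : 0 < D := by
      apply Finset.sum_pos
      · intro i hi
        simp only [Finset.mem_range] at hi
        refine mul_pos (hc _ (by omega)) (sub_pos.2 ?_)
        exact hbmono (by simp only [Set.mem_setOf_eq]; omega) (by simp only [Set.mem_setOf_eq]; omega) (by omega)
      · exact ⟨0, Finset.mem_range.2 (by omega)⟩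
    have hkey3 : b (m + 1) * Sg - Sf ≤ w * D := by
      have : b (m + 1) * Sg - Sf
          = ∑ i ∈ Finset.range m, c (i + 1) * (b (m + 1) - b (i + 1)) * x (i + 1) := by
        rw [hSg, hSf, Finset.mul_sum, ← Finset.sum_sub_distrib]
        exact Finset.sum_congr rfl fun i _ => by ring
      rw [this, hD, Finset.mul_sum]
      refine Finset.sum_le_sum fun i hi => ?_
      simp only [Finset.mem_range] at hi
      have hcoef : 0 ≤ c (i + 1) * (b (m + 1) - b (i + 1)) := by
        refine mul_nonneg (hc _ (by omega)).le (sub_nonneg.2 ?_)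
        exact (hbmono (by simp only [Set.mem_setOf_eq]; omega) (by simp only [Set.mem_setOf_eq]; omega) (by omega)).le
      calc c (i + 1) * (b (m + 1) - b (i + 1)) * x (i + 1)
          ≤ c (i + 1) * (b (m + 1) - b (i + 1)) * w :=
            mul_le_mul_of_nonneg_left (hwx i) hcoef
        _ = w * (c (i + 1) * (b (m + 1) - b (i + 1))) := by ring
    -- algebra
    have hS1 : 0 < ∑ i ∈ Finset.Icc 1 m, b i * c i := hpos m hm1
    set S1 := ∑ i ∈ Finset.Icc 1 m, b i * c i with hS1d
    set Sc := ∑ i ∈ Finset.Icc 1 m, c i with hScd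
    have hDval : D = b (m + 1) * Sc - S1 := by
      rw [hD, hScd, hS1d, hIcc m c, hIcc m (fun i => b i * c i), Finset.mul_sum,
        ← Finset.sum_sub_distrib]
      exact Finset.sum_congr rfl fun i _ => by ring
    have hBm' : Sc ≤ r * S1 := by
      rw [hScd, hS1d]
      exact (div_le_iff₀ hS1).mp hBm
    have hkey : r * b (m + 1) - 1 ≤ w * D := by linarith
    have h9 : D ≤ S1 * (w * D) := by nlinarith [(mul_le_mul_of_nonneg_left hkey hS1.le), (mul_le_mul_of_nonneg_right hBm' hbm1.le)]
    have h10 : 1 ≤ w * S1 := by nlinarith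
    rw [inv_eq_one_div, div_le_iff₀ hS1]
    linarith
  constructor
  · refine le_csInf ⟨w0, ⟨x0, hx0mem, hx0sup⟩⟩ ?_
    rintro y ⟨x, hx, rfl⟩
    exact hlow x hx.1 hx.2.1 hx.2.2.1 hx.2.2.2
  · refine csInf_le ⟨0, ?_⟩ ⟨x0, hx0mem, hx0sup⟩
    rintro y ⟨x, hx, rfl⟩
    exact Real.iSup_nonneg fun i => hx.1 (i + 1)
end

section
/- Let {a_k}_{k≥1} and {σ_k}_{k≥1} be positive increasing sequences, let r > 0, B > 1, and m ∈ ℕ satisfy r · a_{m+1} ≥ B. Then for every square-summable sequence η with ∑_{k≥1} a_k² σ_k² η_k² ≤ 1 and ∑_{k≥1} σ_k² η_k² ≥ r², one has ∑_{k=1}^m η_k² ≥ (1 − B^{−2}) r² / σ_m². -/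
lemma mono_of_succ_le (f : ℕ → ℝ) (h : ∀ k, 1 ≤ k → f k ≤ f (k + 1)) :
    ∀ i j, 1 ≤ i → i ≤ j → f i ≤ f j := by
  intro i j hi hij
  induction j with
  | zero => omega
  | succ n ih =>
    rcases Nat.lt_or_ge i (n+1) with h'|h'
    · exact le_trans (ih (by omega)) (h n (by omega))
    · have : i = n + 1 := by omega
      simp [this]

/-- Key estimate of Proposition 1: if `r·a_{m+1} ≥ B > 1` then any `η` in the
alternative set satisfies `∑_{k=1}^m η_k² ≥ (1 − B⁻²) r² / σ_m²`. -/
theorem lower_bound_partial_sum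
    (a σ : ℕ → ℝ)
    (hapos : ∀ k, 1 ≤ k → 0 < a k) (hσpos : ∀ k, 1 ≤ k → 0 < σ k)
    (hamono : ∀ k, 1 ≤ k → a k ≤ a (k + 1))
    (hσmono : ∀ k, 1 ≤ k → σ k ≤ σ (k + 1))
    (r B : ℝ) (hr : 0 < r) (hB : 1 < B)
    (m : ℕ) (hm : 1 ≤ m) (hra : B ≤ r * a (m + 1))
    (η : ℕ → ℝ)
    (hsum : Summable fun k : ℕ => a (k + 1) ^ 2 * σ (k + 1) ^ 2 * η (k + 1) ^ 2)
    (hsum2 : Summable fun k : ℕ => σ (k + 1) ^ 2 * η (k + 1) ^ 2)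
    (hell : ∑' k : ℕ, a (k + 1) ^ 2 * σ (k + 1) ^ 2 * η (k + 1) ^ 2 ≤ 1)
    (hball : r ^ 2 ≤ ∑' k : ℕ, σ (k + 1) ^ 2 * η (k + 1) ^ 2) :
    (1 - B⁻¹ ^ 2) * r ^ 2 / σ m ^ 2 ≤ ∑ k ∈ Finset.Icc 1 m, η k ^ 2 := by
  set f : ℕ → ℝ := fun k => σ (k + 1) ^ 2 * η (k + 1) ^ 2 with hf
  set g : ℕ → ℝ := fun k => a (k + 1) ^ 2 * σ (k + 1) ^ 2 * η (k + 1) ^ 2 with hg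
  have ha1 : 0 < a (m + 1) := hapos _ (by omega)
  have hσm : 0 < σ m := hσpos _ hm
  have hfnn : ∀ k, 0 ≤ f k := fun k => by simp only [hf]; positivity
  have hgnn : ∀ k, 0 ≤ g k := fun k => by
    have := (hapos (k+1) (by omega)).le
    simp only [hg]; positivity
  -- tail bound: ∑' k, f (k + m) ≤ a(m+1)⁻² * ∑' g ≤ a(m+1)⁻²
  have hsumg' : Summable fun k => g (k + m) := hsum.comp_injective (add_left_injective m)
  have hsumf' : Summable fun k => f (k + m) := hsum2.comp_injective (add_left_injective m)
  have htail : ∑' k, f (k + m) ≤ (a (m+1) ^ 2)⁻¹ := by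
    have hpt : ∀ k, f (k + m) ≤ (a (m+1) ^ 2)⁻¹ * g (k + m) := by
      intro k
      have hle : a (m + 1) ≤ a (k + m + 1) :=
        mono_of_succ_le a hamono _ _ (by omega) (by omega)
      rw [le_inv_mul_iff₀ (by positivity)]
      simp only [hf, hg]
      nlinarith [pow_le_pow_left₀ ha1.le hle 2,
        mul_nonneg (sq_nonneg (σ (k + m + 1))) (sq_nonneg (η (k + m + 1)))]
    have h1 : ∑' k, f (k + m) ≤ ∑' k, (a (m+1) ^ 2)⁻¹ * g (k + m) :=
      Summable.tsum_le_tsum hpt hsumf' (hsumg'.mul_left _)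
    have h2 : ∑' k, g (k + m) ≤ ∑' k, g k := by
      have := hsum.sum_add_tsum_nat_add m
      have hnn : 0 ≤ ∑ i ∈ Finset.range m, g i :=
        Finset.sum_nonneg fun i _ => hgnn i
      linarith
    rw [tsum_mul_left] at h1
    calc ∑' k, f (k + m) ≤ (a (m+1) ^ 2)⁻¹ * ∑' k, g (k + m) := h1
      _ ≤ (a (m+1) ^ 2)⁻¹ * 1 := by
          apply mul_le_mul_of_nonneg_left (le_trans h2 hell) (by positivity)
      _ = (a (m+1) ^ 2)⁻¹ := mul_one _
  -- head lower bound
  have hsplit := hsum2.sum_add_tsum_nat_add m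
  have hhead : r ^ 2 - (a (m+1) ^ 2)⁻¹ ≤ ∑ i ∈ Finset.range m, f i := by
    linarith
  -- a(m+1)⁻² ≤ B⁻² r²
  have hb0 : (0:ℝ) < B := by linarith
  have haB : (a (m+1) ^ 2)⁻¹ ≤ B⁻¹ ^ 2 * r ^ 2 := by
    have h2 : B ^ 2 * (a (m+1) ^ 2)⁻¹ ≤ r ^ 2 := by
      rw [mul_inv_le_iff₀ (by positivity)]
      nlinarith [mul_pos hr ha1]
    calc (a (m+1) ^ 2)⁻¹ = B⁻¹ ^ 2 * (B ^ 2 * (a (m+1) ^ 2)⁻¹) := by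
          field_simp
      _ ≤ B⁻¹ ^ 2 * r ^ 2 := mul_le_mul_of_nonneg_left h2 (by positivity)
  -- relate head sum to η sums
  have hσle : ∀ i ∈ Finset.range m, f i ≤ σ m ^ 2 * η (i + 1) ^ 2 := by
    intro i hi
    simp only [Finset.mem_range] at hi
    have hle : σ (i + 1) ≤ σ m := mono_of_succ_le σ hσmono _ _ (by omega) (by omega)
    have h0 : 0 < σ (i+1) := hσpos _ (by omega)
    simp only [hf]
    exact mul_le_mul_of_nonneg_right (pow_le_pow_left₀ h0.le hle 2) (sq_nonneg _)
  have hheadle : ∑ i ∈ Finset.range m, f i ≤ σ m ^ 2 * ∑ i ∈ Finset.range m, η (i+1) ^ 2 := by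
    rw [Finset.mul_sum]
    exact Finset.sum_le_sum hσle
  have hIcc : ∑ k ∈ Finset.Icc 1 m, η k ^ 2 = ∑ i ∈ Finset.range m, η (i+1) ^ 2 := by
    rw [← Finset.Ico_add_one_right_eq_Icc, Finset.sum_Ico_eq_sum_range]
    simp [Nat.add_comm]
  rw [hIcc, div_le_iff₀ (by positivity)]
  calc (1 - B⁻¹ ^ 2) * r ^ 2 = r ^ 2 - B⁻¹ ^ 2 * r ^ 2 := by ring
    _ ≤ r ^ 2 - (a (m+1) ^ 2)⁻¹ := by linarith
    _ ≤ ∑ i ∈ Finset.range m, f i := hhead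
    _ ≤ σ m ^ 2 * ∑ i ∈ Finset.range m, η (i+1) ^ 2 := hheadle
    _ = (∑ i ∈ Finset.range m, η (i+1) ^ 2) * σ m ^ 2 := by ring
end

section
/- Let α > 0, β > 0. Then the sums J₀(m) = ∑_{k=1}^m exp(4βk)(1 − (k/m)^{2α})² satisfy J₀(m) ≍ exp(4βm)/m² as m → ∞, i.e., there exist constants 0 < C₁ ≤ C₂ < ∞ and m₀ such that C₁ exp(4βm)/m² ≤ J₀(m) ≤ C₂ exp(4βm)/m² for all m ≥ m₀. -/
open Real Finset

lemma one_sub_rpow_le {p x : ℝ} (hp : 0 < p) (hx0 : 0 ≤ x) (hx1 : x ≤ 1) :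
    1 - x ^ p ≤ max p 1 * (1 - x) := by
  rcases le_total p 1 with h | h
  · rw [max_eq_right h, one_mul]
    have hxx : x ^ (1:ℝ) ≤ x ^ p := by
      rcases eq_or_lt_of_le hx0 with rfl | hx0'
      · simp [Real.zero_rpow hp.ne', Real.rpow_one]
      · exact Real.rpow_le_rpow_of_exponent_ge hx0' hx1 h
    rw [Real.rpow_one] at hxx; linarith
  · rw [max_eq_left h]
    have hb : 1 + p * (x - 1) ≤ (1 + (x - 1)) ^ p :=
      one_add_mul_self_le_rpow_one_add (by linarith) h
    have hx : (1 + (x - 1)) = x := by ring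
    rw [hx] at hb; nlinarith

lemma le_one_sub_rpow {p x : ℝ} (hp : 0 < p) (hx0 : 0 ≤ x) (hx1 : x ≤ 1) :
    min p 1 * (1 - x) ≤ 1 - x ^ p := by
  rcases le_total p 1 with h | h
  · rw [min_eq_left h]
    have hb : (1 + (x - 1)) ^ p ≤ 1 + p * (x - 1) :=
      rpow_one_add_le_one_add_mul_self (by linarith) hp.le h
    have hx : (1 + (x - 1)) = x := by ring
    rw [hx] at hb; nlinarith
  · rw [min_eq_right h, one_mul]
    have hxx : x ^ p ≤ x ^ (1:ℝ) := by
      rcases eq_or_lt_of_le hx0 with rfl | hx0'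
      · simp [Real.zero_rpow hp.ne', Real.rpow_one]
      · exact Real.rpow_le_rpow_of_exponent_ge hx0' hx1 h
    rw [Real.rpow_one] at hxx; linarith

lemma J0_term_le (β p : ℝ) (hβ : 0 < β) (hp : 0 < p) (m k : ℕ)
    (hk1 : 1 ≤ k) (hkm : k ≤ m) :
    Real.exp (4 * β * k) * (1 - ((k : ℝ) / m) ^ p) ^ 2 ≤
      (max p 1) ^ 2 / β ^ 2 * Real.exp (4 * β * m) / (m : ℝ) ^ 2
        * (Real.exp (-(2 * β))) ^ (m - k) := by
  have hm : 0 < m := lt_of_lt_of_le hk1 hkm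
  have hm' : (0:ℝ) < m := by exact_mod_cast hm
  set x : ℝ := (k : ℝ) / m with hxdef
  have hx0 : 0 ≤ x := by positivity
  have hx1 : x ≤ 1 := by
    rw [div_le_one hm']; exact_mod_cast hkm
  have hM1 : (1:ℝ) ≤ max p 1 := le_max_right _ _
  have hxp0 : 0 ≤ 1 - x ^ p := by
    have := Real.rpow_le_one hx0 hx1 hp.le; linarith
  have h1 : (1 - x ^ p) ^ 2 ≤ (max p 1) ^ 2 * (1 - x) ^ 2 := by
    have := one_sub_rpow_le hp hx0 hx1
    have h1x : 0 ≤ 1 - x := by linarith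
    nlinarith
  set l : ℕ := m - k with hldef
  have hlx : 1 - x = (l : ℝ) / m := by
    rw [hxdef, hldef]
    rw [Nat.cast_sub hkm]; field_simp
  -- key scalar inequality : exp(4βk) * l^2 ≤ exp(4βm) * r^l / β^2
  have hexp1 : Real.exp (4 * β * k) = Real.exp (4 * β * m) * Real.exp (-(4 * β * l)) := by
    rw [← Real.exp_add]
    congr 1
    rw [hldef, Nat.cast_sub hkm]; ring
  have hr : (Real.exp (-(2 * β))) ^ l = Real.exp (-(2 * β * l)) := by
    rw [← Real.exp_nat_mul]; congr 1; ring
  have hl2 : (β * l) ^ 2 ≤ Real.exp (2 * β * l) := by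
    have h0 : 0 ≤ β * l := by positivity
    have h1' : β * l ≤ Real.exp (β * l) := by
      have := Real.add_one_le_exp (β * l); linarith
    have := mul_le_mul h1' h1' h0 (Real.exp_nonneg _)
    calc (β * l) ^ 2 = (β * l) * (β * l) := sq (β * l) ▸ by ring
      _ ≤ Real.exp (β * l) * Real.exp (β * l) := this
      _ = Real.exp (2 * β * l) := by rw [← Real.exp_add]; ring_nf
  have hkey : Real.exp (4 * β * k) * (l : ℝ) ^ 2 ≤
      Real.exp (4 * β * m) * (Real.exp (-(2 * β))) ^ l / β ^ 2 := by
    rw [hexp1, hr, div_eq_mul_inv, ← sub_nonneg]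
    have expand : Real.exp (4 * β * m) * Real.exp (-(2 * β * l)) * (β ^ 2)⁻¹
        - Real.exp (4 * β * m) * Real.exp (-(4 * β * l)) * (l:ℝ) ^ 2
        = Real.exp (4 * β * m) * Real.exp (-(4 * β * l)) * (β ^ 2)⁻¹ *
          (Real.exp (2 * β * l) - (β * l) ^ 2) := by
      rw [show Real.exp (-(2 * β * l)) = Real.exp (-(4 * β * l)) * Real.exp (2 * β * l) by
        rw [← Real.exp_add]; ring_nf]
      field_simp
    rw [expand]
    have : 0 ≤ Real.exp (2 * β * l) - (β * l) ^ 2 := by linarith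
    positivity
  calc Real.exp (4 * β * k) * (1 - x ^ p) ^ 2
      ≤ Real.exp (4 * β * k) * ((max p 1) ^ 2 * (1 - x) ^ 2) := by
        exact mul_le_mul_of_nonneg_left h1 (Real.exp_nonneg _)
    _ = (max p 1) ^ 2 / (m : ℝ) ^ 2 * (Real.exp (4 * β * k) * (l : ℝ) ^ 2) := by
        rw [hlx]; field_simp
    _ ≤ (max p 1) ^ 2 / (m : ℝ) ^ 2 *
          (Real.exp (4 * β * m) * (Real.exp (-(2 * β))) ^ l / β ^ 2) := by
        apply mul_le_mul_of_nonneg_left hkey; positivity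
    _ = (max p 1) ^ 2 / β ^ 2 * Real.exp (4 * β * m) / (m : ℝ) ^ 2
          * (Real.exp (-(2 * β))) ^ (m - k) := by
        rw [hldef]; field_simp

lemma geom_tail_sum_le (r : ℝ) (hr0 : 0 ≤ r) (hr1 : r < 1) (m : ℕ) (_hm : 1 ≤ m) :
    ∑ k ∈ Finset.Icc 1 m, r ^ (m - k) ≤ (1 - r)⁻¹ := by
  have h1 : ∑ k ∈ Finset.Icc 1 m, r ^ (m - k) = ∑ i ∈ Finset.range m, r ^ i := by
    rw [← Finset.Ico_add_one_right_eq_Icc, Finset.sum_Ico_eq_sum_range]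
    have hmm : m + 1 - 1 = m := rfl
    rw [hmm, ← Finset.sum_range_reflect (fun i => r ^ i) m]
    apply Finset.sum_congr rfl
    intro i hi
    rw [Finset.mem_range] at hi
    congr 1
    omega
  rw [h1]
  have hne : r ≠ 1 := hr1.ne
  rw [geom_sum_eq hne]
  have h2 : 0 < 1 - r := by linarith
  rw [show (r ^ m - 1) / (r - 1) = (1 - r ^ m) / (1 - r) by
    rw [div_eq_div_iff (by linarith) (by linarith)]; ring]
  rw [← one_div]
  gcongr
  · nlinarith [pow_nonneg hr0 m]

/-- In the severely ill-posed Sobolev case,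
`J₀(m) = ∑_{k=1}^m exp(4βk)(1 − (k/m)^{2α})² ≍ exp(4βm)/m²`. -/
theorem J0_order_of_magnitude (α β : ℝ) (hα : 0 < α) (hβ : 0 < β) :
    ∃ C₁ C₂ : ℝ, ∃ m₀ : ℕ, 0 < C₁ ∧ C₁ ≤ C₂ ∧ ∀ m : ℕ, m₀ ≤ m →
      C₁ * Real.exp (4 * β * m) / (m : ℝ) ^ 2 ≤
        (∑ k ∈ Finset.Icc 1 m, Real.exp (4 * β * k) * (1 - ((k : ℝ) / m) ^ (2 * α)) ^ 2) ∧
      (∑ k ∈ Finset.Icc 1 m, Real.exp (4 * β * k) * (1 - ((k : ℝ) / m) ^ (2 * α)) ^ 2) ≤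
        C₂ * Real.exp (4 * β * m) / (m : ℝ) ^ 2 := by
  set p := 2 * α with hpdef
  have hp : 0 < p := by positivity
  set r := Real.exp (-(2 * β)) with hrdef
  have hr0 : 0 < r := Real.exp_pos _
  have hr1 : r < 1 := by
    rw [hrdef, Real.exp_lt_one_iff]; linarith
  set c := min p 1 with hcdef
  have hc : 0 < c := lt_min hp one_pos
  set M := max p 1 with hMdef
  have hM : 0 < M := lt_of_lt_of_le one_pos (le_max_right _ _)
  have h1r : 0 < 1 - r := by linarith
  refine ⟨c ^ 2 * Real.exp (-(4 * β)),
    max (c ^ 2 * Real.exp (-(4 * β))) (M ^ 2 / β ^ 2 * (1 - r)⁻¹), 2,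
    by positivity, le_max_left _ _, ?_⟩
  intro m hm
  have hm1 : 1 ≤ m := le_trans one_le_two hm
  have hm2 : (2:ℝ) ≤ m := by exact_mod_cast hm
  have hm' : (0:ℝ) < m := by linarith
  constructor
  · -- lower bound via the single term k = m - 1
    have hmem : m - 1 ∈ Finset.Icc 1 m := by
      rw [Finset.mem_Icc]; omega
    have hnonneg : ∀ i ∈ Finset.Icc 1 m,
        0 ≤ Real.exp (4 * β * i) * (1 - ((i : ℝ) / m) ^ p) ^ 2 := by
      intro i _; positivity
    have hsingle := Finset.single_le_sum hnonneg hmem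
    refine le_trans ?_ hsingle
    have hcast : ((m - 1 : ℕ) : ℝ) = (m : ℝ) - 1 := by
      rw [Nat.cast_sub hm1]; norm_num
    rw [hcast]
    set x : ℝ := ((m : ℝ) - 1) / m with hxdef
    have hx0 : 0 ≤ x := by
      apply div_nonneg _ hm'.le; linarith
    have hx1 : x ≤ 1 := by rw [hxdef, div_le_one hm']; linarith
    have hlow := le_one_sub_rpow hp hx0 hx1
    rw [← hcdef] at hlow
    have h1x : 1 - x = 1 / m := by rw [hxdef]; field_simp; ring
    rw [h1x] at hlow
    have hsq : (c / m) ^ 2 ≤ (1 - x ^ p) ^ 2 := by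
      apply pow_le_pow_left₀ (by positivity)
      calc c / m = c * (1 / m) := by ring
        _ ≤ 1 - x ^ p := hlow
    have hexp : Real.exp (4 * β * ((m : ℝ) - 1))
        = Real.exp (4 * β * m) * Real.exp (-(4 * β)) := by
      rw [← Real.exp_add]; ring_nf
    calc c ^ 2 * Real.exp (-(4 * β)) * Real.exp (4 * β * m) / (m : ℝ) ^ 2
        = Real.exp (4 * β * ((m : ℝ) - 1)) * (c / m) ^ 2 := by
          rw [hexp]; field_simp
      _ ≤ Real.exp (4 * β * ((m : ℝ) - 1)) * (1 - x ^ p) ^ 2 :=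
          mul_le_mul_of_nonneg_left hsq (Real.exp_nonneg _)
  · -- upper bound
    have hterm : ∀ k ∈ Finset.Icc 1 m,
        Real.exp (4 * β * k) * (1 - ((k : ℝ) / m) ^ p) ^ 2 ≤
          M ^ 2 / β ^ 2 * Real.exp (4 * β * m) / (m : ℝ) ^ 2 * r ^ (m - k) := by
      intro k hk
      rw [Finset.mem_Icc] at hk
      exact J0_term_le β p hβ hp m k hk.1 hk.2
    calc (∑ k ∈ Finset.Icc 1 m, Real.exp (4 * β * k) * (1 - ((k : ℝ) / m) ^ p) ^ 2)
        ≤ ∑ k ∈ Finset.Icc 1 m,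
            M ^ 2 / β ^ 2 * Real.exp (4 * β * m) / (m : ℝ) ^ 2 * r ^ (m - k) :=
          Finset.sum_le_sum hterm
      _ = M ^ 2 / β ^ 2 * Real.exp (4 * β * m) / (m : ℝ) ^ 2 *
            ∑ k ∈ Finset.Icc 1 m, r ^ (m - k) := by rw [Finset.mul_sum]
      _ ≤ M ^ 2 / β ^ 2 * Real.exp (4 * β * m) / (m : ℝ) ^ 2 * (1 - r)⁻¹ := by
          apply mul_le_mul_of_nonneg_left (geom_tail_sum_le r hr0.le hr1 m hm1)
          positivity
      _ = (M ^ 2 / β ^ 2 * (1 - r)⁻¹) * Real.exp (4 * β * m) / (m : ℝ) ^ 2 := by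
          ring
      _ ≤ max (c ^ 2 * Real.exp (-(4 * β))) (M ^ 2 / β ^ 2 * (1 - r)⁻¹) *
            Real.exp (4 * β * m) / (m : ℝ) ^ 2 := by
          gcongr
          exact le_max_right _ _
end

section
/- Let T_ε → ∞ and define T_{ε,k} = max(T_ε, √(2(log k + log log k))) for k ≥ 2. Then ∑_{k≥2} Φ(−T_{ε,k}) → 0 as ε → 0, where Φ is the standard normal CDF. -/
open Filter in
/-- The standard Gaussian cumulative distribution function `Φ`. -/
noncomputable def stdGaussianCDF (x : ℝ) : ℝ :=
  ProbabilityTheory.cdf (ProbabilityTheory.gaussianReal 0 1) x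

open Filter MeasureTheory Real Set Topology

lemma exp_deriv_aux (x : ℝ) :
    HasDerivAt (fun y : ℝ => Real.exp (-y^2/2)) (-x * Real.exp (-x^2/2)) x := by
  have h1 : HasDerivAt (fun y : ℝ => -y^2/2) (-x) x := by
    have h := ((hasDerivAt_pow 2 x).neg.div_const 2)
    refine h.congr_deriv ?_
    simp
    ring
  simpa [mul_comm] using h1.exp

lemma integrable_neg_mul_exp : Integrable (fun x : ℝ => -x * Real.exp (-x^2/2)) := by
  have h := (integrable_mul_exp_neg_mul_sq (by norm_num : (0:ℝ) < 1/2)).neg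
  refine h.congr (Eventually.of_forall fun x => ?_)
  simp only [Pi.neg_apply]
  rw [show -(1/2 : ℝ) * x^2 = -x^2/2 by ring]
  ring

lemma integral_Iic_neg_mul_exp (a : ℝ) :
    ∫ x in Set.Iic a, -x * Real.exp (-x^2/2) = Real.exp (-a^2/2) := by
  have ht : Tendsto (fun y : ℝ => Real.exp (-y^2/2)) atBot (𝓝 0) := by
    apply Real.tendsto_exp_atBot.comp
    have h2 : Tendsto (fun y : ℝ => y^2) atBot atTop := by
      have hn : Tendsto (fun x : ℝ => -x) atBot atTop := tendsto_neg_atBot_atTop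
      have hp : Tendsto (fun x : ℝ => x^2) atTop atTop := tendsto_pow_atTop (by norm_num)
      have h : Tendsto (fun y : ℝ => (-y)^2) atBot atTop := hp.comp hn
      refine h.congr fun y => ?_
      ring
    have h3 := tendsto_neg_atTop_atBot.comp (h2.atTop_div_const (by norm_num : (0:ℝ) < 2))
    refine h3.congr fun y => ?_
    simp [neg_div]
  have h := integral_Iic_of_hasDerivAt_of_tendsto' (a := a)
    (fun x _ => exp_deriv_aux x) integrable_neg_mul_exp.integrableOn ht
  simpa using h


lemma stdGaussianCDF_nonneg (x : ℝ) : 0 ≤ stdGaussianCDF x :=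
  ProbabilityTheory.cdf_nonneg _ x

lemma stdGaussianCDF_le_one (x : ℝ) : stdGaussianCDF x ≤ 1 :=
  ProbabilityTheory.cdf_le_one _ x

lemma stdGaussianCDF_mono {x y : ℝ} (h : x ≤ y) : stdGaussianCDF x ≤ stdGaussianCDF y :=
  ProbabilityTheory.monotone_cdf _ h

lemma stdGaussianCDF_tendsto : Tendsto stdGaussianCDF atBot (𝓝 0) :=
  ProbabilityTheory.tendsto_cdf_atBot _

lemma stdGaussianCDF_tail {s : ℝ} (hs : 0 < s) :
    stdGaussianCDF (-s) ≤ Real.exp (-s^2/2) / s := by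
  have hpdf : ∀ x : ℝ, ProbabilityTheory.gaussianPDFReal 0 1 x
      = (Real.sqrt (2*π))⁻¹ * Real.exp (-x^2/2) := by
    intro x
    simp [ProbabilityTheory.gaussianPDFReal]
  have heq : stdGaussianCDF (-s)
      = (Real.sqrt (2*π))⁻¹ * ∫ x in Set.Iic (-s), Real.exp (-x^2/2) := by
    rw [stdGaussianCDF, ProbabilityTheory.cdf_eq_real, measureReal_def,
      ProbabilityTheory.gaussianReal_apply_eq_integral 0 one_ne_zero,
      ENNReal.toReal_ofReal (setIntegral_nonneg measurableSet_Iic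
        (fun x _ => ProbabilityTheory.gaussianPDFReal_nonneg 0 1 x))]
    simp_rw [hpdf]
    rw [integral_const_mul]
  have hint1 : IntegrableOn (fun x : ℝ => Real.exp (-x^2/2)) (Set.Iic (-s)) := by
    have h := integrable_exp_neg_mul_sq (by norm_num : (0:ℝ) < 1/2)
    refine (h.congr (Eventually.of_forall fun x => ?_)).integrableOn
    simp only [show ∀ y : ℝ, -(1/2 : ℝ) * y^2 = -y^2/2 from fun y => by ring]
  have hint2 : IntegrableOn (fun x : ℝ => (-x/s) * Real.exp (-x^2/2)) (Set.Iic (-s)) := by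
    have h := integrable_neg_mul_exp.div_const s
    refine (h.congr (Eventually.of_forall fun x => ?_)).integrableOn
    ring
  have hmono : ∫ x in Set.Iic (-s), Real.exp (-x^2/2)
      ≤ ∫ x in Set.Iic (-s), (-x/s) * Real.exp (-x^2/2) := by
    refine setIntegral_mono_on hint1 hint2 measurableSet_Iic fun x hx => ?_
    have hx' : x ≤ -s := hx
    have h1 : (1:ℝ) ≤ -x/s := (one_le_div hs).2 (by linarith)
    exact le_mul_of_one_le_left (Real.exp_nonneg _) h1
  have hval : ∫ x in Set.Iic (-s), (-x/s) * Real.exp (-x^2/2) = Real.exp (-s^2/2) / s := by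
    have h : ∀ x : ℝ, (-x/s) * Real.exp (-x^2/2) = s⁻¹ * (-x * Real.exp (-x^2/2)) :=
      fun x => by ring
    simp_rw [h]
    rw [integral_const_mul, integral_Iic_neg_mul_exp, neg_sq]
    exact (div_eq_inv_mul _ _).symm
  have hI0 : 0 ≤ ∫ x in Set.Iic (-s), Real.exp (-x^2/2) :=
    setIntegral_nonneg measurableSet_Iic fun x _ => Real.exp_nonneg _
  have hc : (Real.sqrt (2*π))⁻¹ ≤ 1 := by
    rw [inv_le_one_iff₀]
    right
    rw [show (1:ℝ) = Real.sqrt 1 by simp]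
    exact Real.sqrt_le_sqrt (by nlinarith [Real.pi_gt_three])
  calc stdGaussianCDF (-s)
      = (Real.sqrt (2*π))⁻¹ * ∫ x in Set.Iic (-s), Real.exp (-x^2/2) := heq
    _ ≤ 1 * (Real.exp (-s^2/2) / s) := by
        apply mul_le_mul hc (hmono.trans hval.le) hI0 one_pos.le
    _ = Real.exp (-s^2/2) / s := one_mul _
lemma summable_base : Summable (fun k : ℕ => 1 / (((k:ℝ)+1) * Real.sqrt ((k:ℝ)+1))) := by
  have h := (Real.summable_one_div_nat_add_rpow 1 (3/2)).mpr (by norm_num)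
  refine h.congr fun k => ?_
  have hk : (0:ℝ) < (k:ℝ)+1 := by positivity
  rw [abs_of_pos hk, show (3/2 : ℝ) = 1 + 1/2 by norm_num, Real.rpow_add hk, Real.rpow_one,
    ← Real.sqrt_eq_rpow]

lemma summable_condensed_term :
    Summable (fun k : ℕ => 1 / (max 1 ((k:ℝ) * Real.log 2)
      * Real.sqrt (max 1 ((k:ℝ) * Real.log 2)))) := by
  refine Summable.of_nonneg_of_le (fun k => by positivity) (fun k => ?_)
    (summable_base.mul_left 8)
  set m : ℝ := max 1 ((k:ℝ) * Real.log 2) with hm_def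
  have hm1 : (1:ℝ) ≤ m := le_max_left _ _
  have hlog2 : (0.6931471803 : ℝ) < Real.log 2 := Real.log_two_gt_d9
  have hm : ((k:ℝ)+1)/4 ≤ m := by
    rcases le_or_gt ((k:ℝ)+1) 4 with h | h
    · calc ((k:ℝ)+1)/4 ≤ 1 := by linarith
        _ ≤ m := hm1
    · have hk1 : (1:ℝ) ≤ (k:ℝ) := by linarith
      calc ((k:ℝ)+1)/4 ≤ (k:ℝ)/2 := by linarith
        _ ≤ (k:ℝ) * Real.log 2 := by nlinarith [Nat.cast_nonneg (α := ℝ) k]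
        _ ≤ m := le_max_right _ _
  have hks : Real.sqrt ((k:ℝ)+1) / 2 ≤ Real.sqrt m := by
    rw [show (2:ℝ) = Real.sqrt 4 by rw [show (4:ℝ) = 2^2 by norm_num, Real.sqrt_sq]; norm_num,
      ← Real.sqrt_div (by positivity)]
    exact Real.sqrt_le_sqrt hm
  have hpos : (0:ℝ) < ((k:ℝ)+1) * Real.sqrt ((k:ℝ)+1) := by positivity
  have hprod : ((k:ℝ)+1) * Real.sqrt ((k:ℝ)+1) / 8 ≤ m * Real.sqrt m := by
    calc ((k:ℝ)+1) * Real.sqrt ((k:ℝ)+1) / 8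
        = (((k:ℝ)+1)/4) * (Real.sqrt ((k:ℝ)+1)/2) := by ring
      _ ≤ m * Real.sqrt m := by
          apply mul_le_mul hm hks (by positivity) (by linarith)
  calc 1 / (m * Real.sqrt m) ≤ 1 / (((k:ℝ)+1) * Real.sqrt ((k:ℝ)+1) / 8) := by
        apply one_div_le_one_div_of_le (by positivity) hprod
    _ = 8 * (1 / (((k:ℝ)+1) * Real.sqrt ((k:ℝ)+1))) := by
        field_simp

lemma summable_f :
    Summable (fun n : ℕ => 1 / ((n:ℝ) * max 1 (Real.log n) * Real.sqrt (max 1 (Real.log n)))) := by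
  set f : ℕ → ℝ := fun n => 1 / ((n:ℝ) * max 1 (Real.log n) * Real.sqrt (max 1 (Real.log n)))
    with hf_def
  have h_nonneg : ∀ n, 0 ≤ f n := fun n => by positivity
  have h_mono : ∀ ⦃m n : ℕ⦄, 0 < m → m ≤ n → f n ≤ f m := by
    intro m n hm hmn
    have h1 : (0:ℝ) < m := by exact_mod_cast hm
    have h1' : (0:ℝ) < n := lt_of_lt_of_le h1 (by exact_mod_cast hmn)
    have h2 : (0:ℝ) < max 1 (Real.log m) := lt_of_lt_of_le one_pos (le_max_left _ _)
    have h2' : (0:ℝ) < max 1 (Real.log n) := lt_of_lt_of_le one_pos (le_max_left _ _)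
    have hcast : (m:ℝ) ≤ (n:ℝ) := by exact_mod_cast hmn
    have hmax : max 1 (Real.log m) ≤ max 1 (Real.log n) :=
      max_le_max le_rfl (Real.log_le_log h1 hcast)
    apply one_div_le_one_div_of_le
    · exact mul_pos (mul_pos h1 h2) (Real.sqrt_pos.2 h2)
    · exact mul_le_mul (mul_le_mul hcast hmax h2.le h1'.le)
        (Real.sqrt_le_sqrt hmax) (Real.sqrt_nonneg _)
        (mul_nonneg h1'.le h2'.le)
  rw [← summable_condensed_iff_of_nonneg h_nonneg h_mono]
  refine summable_condensed_term.congr fun k => ?_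
  have h2k : ((2:ℝ))^k ≠ 0 := by positivity
  rw [hf_def]
  simp only [Nat.cast_pow, Nat.cast_ofNat, Real.log_pow]
  set M : ℝ := max 1 ((k:ℝ) * Real.log 2)
  rw [show (2:ℝ)^k * (1 / ((2:ℝ)^k * M * Real.sqrt M)) = (2:ℝ)^k / (2:ℝ)^k * (1 / (M * Real.sqrt M)) by ring,
    div_self h2k, one_mul]

lemma summable_B : Summable (fun k : ℕ =>
    stdGaussianCDF (-(Real.sqrt (2 * (Real.log ((k : ℝ) + 2)
      + Real.log (Real.log ((k : ℝ) + 2))))))) := by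
  have hg : Summable (fun k : ℕ => 2 * (1 / (((k:ℝ)+2) * max 1 (Real.log ((k:ℝ)+2))
      * Real.sqrt (max 1 (Real.log ((k:ℝ)+2)))))) := by
    have h := ((summable_nat_add_iff 2).mpr summable_f).mul_left 2
    refine h.congr fun k => ?_
    push_cast
    ring_nf
  refine Summable.of_nonneg_of_le (fun k => stdGaussianCDF_nonneg _) (fun k => ?_) hg
  rcases Nat.eq_zero_or_pos k with rfl | hk
  · have h2 : Real.log 2 ≤ 1 := by
      have := Real.log_two_lt_d9; linarith
    have hmax : (1:ℝ) ⊔ Real.log (((0:ℕ):ℝ)+2) = 1 := by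
      rw [show ((0:ℕ):ℝ)+2 = 2 by norm_num]
      exact max_eq_left h2
    calc stdGaussianCDF _ ≤ 1 := stdGaussianCDF_le_one _
      _ ≤ 2 * (1 / ((((0:ℕ):ℝ)+2) * ((1:ℝ) ⊔ Real.log (((0:ℕ):ℝ)+2))
          * Real.sqrt ((1:ℝ) ⊔ Real.log (((0:ℕ):ℝ)+2)))) := by
          rw [hmax]; norm_num
  · set L := Real.log ((k:ℝ)+2) with hL
    have hk3 : (3:ℝ) ≤ (k:ℝ)+2 := by
      have h1 : (1:ℝ) ≤ (k:ℝ) := by exact_mod_cast hk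
      linarith
    have hX : (0:ℝ) < (k:ℝ)+2 := by linarith
    have hL1 : 1 < L := by
      have he : Real.exp 1 < 3 := by nlinarith [Real.exp_one_lt_d9]
      calc (1:ℝ) = Real.log (Real.exp 1) := (Real.log_exp 1).symm
        _ < L := Real.log_lt_log (Real.exp_pos 1) (lt_of_lt_of_le he hk3)
    have hLpos : 0 < L := lt_trans one_pos hL1
    have hlogL : 0 ≤ Real.log L := Real.log_nonneg hL1.le
    set s := Real.sqrt (2 * (L + Real.log L)) with hs_def
    have hs_pos : 0 < s := Real.sqrt_pos.2 (by linarith)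
    have hsq : s^2 = 2 * (L + Real.log L) := Real.sq_sqrt (by linarith)
    have hsL : Real.sqrt L ≤ s := Real.sqrt_le_sqrt (by linarith)
    have hexp : Real.exp (-s^2/2) = 1 / (((k:ℝ)+2) * L) := by
      rw [hsq, show -(2 * (L + Real.log L))/2 = -L + -Real.log L by ring, Real.exp_add,
        Real.exp_neg, Real.exp_neg, Real.exp_log hX, Real.exp_log hLpos]
      rw [one_div, mul_inv]
    have hmax : (1:ℝ) ⊔ L = L := max_eq_right hL1.le
    have hsqrtL : 0 < Real.sqrt L := Real.sqrt_pos.2 hLpos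
    have hden : (0:ℝ) < ((k:ℝ)+2) * L * Real.sqrt L :=
      mul_pos (mul_pos hX hLpos) hsqrtL
    calc stdGaussianCDF (-s) ≤ Real.exp (-s^2/2) / s := stdGaussianCDF_tail hs_pos
      _ = 1 / (((k:ℝ)+2) * L * s) := by rw [hexp, div_div]
      _ ≤ 1 / (((k:ℝ)+2) * L * Real.sqrt L) := by
          apply one_div_le_one_div_of_le hden
          exact mul_le_mul_of_nonneg_left hsL (mul_pos hX hLpos).le
      _ ≤ 2 * (1 / (((k:ℝ)+2) * ((1:ℝ) ⊔ L) * Real.sqrt ((1:ℝ) ⊔ L))) := by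
          rw [hmax]
          have : (0:ℝ) ≤ 1 / (((k:ℝ)+2) * L * Real.sqrt L) := by positivity
          linarith

/-- For thresholds `T_{ε,k} = max(T_ε, √(2(log k + log log k)))` with
`T_ε → ∞` as `ε → 0⁺`, one has `∑_{k ≥ 2} Φ(−T_{ε,k}) → 0`. -/
theorem adaptive_threshold_level
    (T : ℝ → ℝ)
    (hT : Filter.Tendsto T (nhdsWithin 0 (Set.Ioi 0)) Filter.atTop) :
    Filter.Tendsto (fun ε => ∑' k : ℕ,
        stdGaussianCDF (-(max (T ε)
          (Real.sqrt (2 * (Real.log ((k : ℝ) + 2) + Real.log (Real.log ((k : ℝ) + 2))))))))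
      (nhdsWithin 0 (Set.Ioi 0)) (nhds 0) := by
  set sK : ℕ → ℝ := fun k =>
    Real.sqrt (2 * (Real.log ((k : ℝ) + 2) + Real.log (Real.log ((k : ℝ) + 2)))) with hsK
  have h0 : Tendsto (fun ε => stdGaussianCDF (-(T ε))) (nhdsWithin 0 (Set.Ioi 0)) (𝓝 0) := by
    have h1 : Tendsto (fun t : ℝ => stdGaussianCDF (-t)) atTop (𝓝 0) :=
      stdGaussianCDF_tendsto.comp tendsto_neg_atTop_atBot
    exact h1.comp hT
  have hmain := tendsto_tsum_of_dominated_convergence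
    (f := fun ε k => stdGaussianCDF (-(max (T ε) (sK k))))
    (g := fun _ : ℕ => (0:ℝ)) (bound := fun k => stdGaussianCDF (-(sK k)))
    summable_B
    (fun k => squeeze_zero (fun ε => stdGaussianCDF_nonneg _)
      (fun ε => stdGaussianCDF_mono (neg_le_neg (le_max_left _ _))) h0)
    (Eventually.of_forall fun ε k => by
      rw [Real.norm_eq_abs, abs_of_nonneg (stdGaussianCDF_nonneg _)]
      exact stdGaussianCDF_mono (neg_le_neg (le_max_right _ _)))
  rw [tsum_zero] at hmain
  exact hmain
end
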